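/- Let W be a 4-dimensional real vector space with a neutral metric g (signature (2,2)) and orthonormal basis e_1, e_2, e_3, e_4 with ε_1 = ε_2 = 1, ε_3 = ε_4 = −1, where ε_k = ‖e_k‖². Define skew-symmetric endomorphisms S_{ij} of W by S_{ij}e_k = ε_k(δ_{ik}e_j − δ_{kj}e_i), and set I_1 = S_{12} − S_{34}, I_2 = S_{13} − S_{24}, I_3 = S_{14} + S_{23}, J_1 = S_{12} + S_{34}, J_2 = S_{13} + S_{24}, J_3 = S_{14} − S_{23}. Then an endomorphism K = Σ_{r=1}^{3}(x_r I_r + y_r J_r) satisfies K² = −Id if and only if either (x_1² − x_2² − x_3² = 1 and y_1 = y_2 = y_3 = 0) or (y_1² − y_2² − y_3² = 1 and x_1 = x_2 = x_3 = 0). Consequently, since I_1, I_2, I_3, J_1, J_2, J_3 form a basis of the space of g-skew-symmetric endomorphisms of W, the set of complex structures on W compatible with g is the disjoint union of two copies of the hyperboloid x_1² − x_2² − x_3² = 1. -/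

import Mathlib

theorem classify12 (A B C A' B' C' : ℝ)
    (h1 : -A^2 + B^2 + C^2 = -1)
    (h2 : -A^2 + B'^2 + C'^2 = -1)
    (h3 : B^2 + C'^2 - A'^2 = -1)
    (h4 : C^2 + B'^2 - A'^2 = -1)
    (h6 : A*C' - C*A' = 0)
    (h7 : -A*B' + B*A' = 0) :
    (A' = A ∧ B' = B ∧ C' = C) ∨ (A' = -A ∧ B' = -B ∧ C' = -C) := by
  have hA : A ≠ 0 := by intro h; rw [h] at h1; nlinarith [sq_nonneg B, sq_nonneg C]
  have hA2 : (A' - A) * (A' + A) = 0 := by nlinarith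
  rcases mul_eq_zero.mp hA2 with h | h
  · left
    have hAA : A' = A := by linarith
    refine ⟨hAA, ?_, ?_⟩
    · have : A * B' = A * B := by rw [hAA] at h7; linarith
      exact mul_left_cancel₀ hA this
    · have : A * C' = A * C := by rw [hAA] at h6; linarith
      exact mul_left_cancel₀ hA this
  · right
    have hAA : A' = -A := by linarith
    refine ⟨hAA, ?_, ?_⟩
    · have : A * B' = A * (-B) := by rw [hAA] at h7; linarith
      exact mul_left_cancel₀ hA this
    · have : A * C' = A * (-C) := by rw [hAA] at h6; linarith
      exact mul_left_cancel₀ hA this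

set_option maxHeartbeats 4000000 in
theorem stmt12 {W : Type*} [AddCommGroup W] [Module ℝ W]
    (g : W →ₗ[ℝ] W →ₗ[ℝ] ℝ) (hsymm : ∀ v w, g v w = g w v)
    (e : Module.Basis (Fin 4) ℝ W)
    (horth : ∀ i j, i ≠ j → g (e i) (e j) = 0)
    (hnorm : ∀ i : Fin 4, g (e i) (e i) = if (i : ℕ) < 2 then 1 else -1)
    (S : Fin 4 → Fin 4 → (W →ₗ[ℝ] W))
    (hS : ∀ i j k : Fin 4, S i j (e k) = g (e k) (e k) •
      ((if i = k then (1 : ℝ) else 0) • e j - (if k = j then (1 : ℝ) else 0) • e i))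
    (I1 I2 I3 J1 J2 J3 : W →ₗ[ℝ] W)
    (hI1 : I1 = S 0 1 - S 2 3) (hI2 : I2 = S 0 2 - S 1 3) (hI3 : I3 = S 0 3 + S 1 2)
    (hJ1 : J1 = S 0 1 + S 2 3) (hJ2 : J2 = S 0 2 + S 1 3) (hJ3 : J3 = S 0 3 - S 1 2) :
    (∀ x y : Fin 3 → ℝ,
      (x 0 • I1 + x 1 • I2 + x 2 • I3 + y 0 • J1 + y 1 • J2 + y 2 • J3) ∘ₗ
        (x 0 • I1 + x 1 • I2 + x 2 • I3 + y 0 • J1 + y 1 • J2 + y 2 • J3)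
        = -LinearMap.id
      ↔ ((x 0 ^ 2 - x 1 ^ 2 - x 2 ^ 2 = 1 ∧ y = 0) ∨
         (y 0 ^ 2 - y 1 ^ 2 - y 2 ^ 2 = 1 ∧ x = 0))) ∧
    ({K : W →ₗ[ℝ] W | K ∘ₗ K = -LinearMap.id ∧ ∀ v w, g (K v) w = - g v (K w)} =
      {K : W →ₗ[ℝ] W | ∃ x : Fin 3 → ℝ, x 0 ^ 2 - x 1 ^ 2 - x 2 ^ 2 = 1 ∧
          K = x 0 • I1 + x 1 • I2 + x 2 • I3} ∪
      {K : W →ₗ[ℝ] W | ∃ y : Fin 3 → ℝ, y 0 ^ 2 - y 1 ^ 2 - y 2 ^ 2 = 1 ∧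
          K = y 0 • J1 + y 1 • J2 + y 2 • J3}) ∧
    Disjoint
      {K : W →ₗ[ℝ] W | ∃ x : Fin 3 → ℝ, x 0 ^ 2 - x 1 ^ 2 - x 2 ^ 2 = 1 ∧
          K = x 0 • I1 + x 1 • I2 + x 2 • I3}
      {K : W →ₗ[ℝ] W | ∃ y : Fin 3 → ℝ, y 0 ^ 2 - y 1 ^ 2 - y 2 ^ 2 = 1 ∧
          K = y 0 • J1 + y 1 • J2 + y 2 • J3} := by
  have hn0 : g (e 0) (e 0) = 1 := by rw [hnorm, if_pos (by decide)]
  have hn1 : g (e 1) (e 1) = 1 := by rw [hnorm, if_pos (by decide)]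
  have hn2 : g (e 2) (e 2) = -1 := by rw [hnorm, if_neg (by decide)]
  have hn3 : g (e 3) (e 3) = -1 := by rw [hnorm, if_neg (by decide)]
  have hKe0 : ∀ x y : Fin 3 → ℝ, (x 0 • I1 + x 1 • I2 + x 2 • I3 + y 0 • J1 + y 1 • J2 + y 2 • J3) (e 0)
      = (x 0 + y 0) • e 1 + (x 1 + y 1) • e 2 + (x 2 + y 2) • e 3 := by
    intro x y
    simp [hI1, hI2, hI3, hJ1, hJ2, hJ3, hS, hn0, hn1, hn2, hn3]
    try module
  have hKe1 : ∀ x y : Fin 3 → ℝ, (x 0 • I1 + x 1 • I2 + x 2 • I3 + y 0 • J1 + y 1 • J2 + y 2 • J3) (e 1)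
      = (-(x 0 + y 0)) • e 0 + (x 2 - y 2) • e 2 + (-(x 1 - y 1)) • e 3 := by
    intro x y
    simp [hI1, hI2, hI3, hJ1, hJ2, hJ3, hS, hn0, hn1, hn2, hn3]
    try module
  have hKe2 : ∀ x y : Fin 3 → ℝ, (x 0 • I1 + x 1 • I2 + x 2 • I3 + y 0 • J1 + y 1 • J2 + y 2 • J3) (e 2)
      = (x 1 + y 1) • e 0 + (x 2 - y 2) • e 1 + (x 0 - y 0) • e 3 := by
    intro x y
    simp [hI1, hI2, hI3, hJ1, hJ2, hJ3, hS, hn0, hn1, hn2, hn3]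
    try module
  have hKe3 : ∀ x y : Fin 3 → ℝ, (x 0 • I1 + x 1 • I2 + x 2 • I3 + y 0 • J1 + y 1 • J2 + y 2 • J3) (e 3)
      = (x 2 + y 2) • e 0 + (-(x 1 - y 1)) • e 1 + (-(x 0 - y 0)) • e 2 := by
    intro x y
    simp [hI1, hI2, hI3, hJ1, hJ2, hJ3, hS, hn0, hn1, hn2, hn3]
    try module
  have hgj : ∀ (v : W) (j : Fin 4), g v (e j) = e.repr v j * g (e j) (e j) := by
    intro v j
    conv_lhs => rw [← e.sum_repr v]
    rw [Fin.sum_univ_four]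
    have hj : j = 0 ∨ j = 1 ∨ j = 2 ∨ j = 3 := by omega
    rcases hj with rfl | rfl | rfl | rfl <;>
      simp [horth, hn0, hn1, hn2, hn3] <;> ring
  have hg0 : ∀ v : W, g v (e 0) = e.repr v 0 := by
    intro v; rw [hgj v 0, hn0]; ring
  have hg1 : ∀ v : W, g v (e 1) = e.repr v 1 := by
    intro v; rw [hgj v 1, hn1]; ring
  have hg2 : ∀ v : W, g v (e 2) = -(e.repr v 2) := by
    intro v; rw [hgj v 2, hn2]; ring
  have hg3 : ∀ v : W, g v (e 3) = -(e.repr v 3) := by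
    intro v; rw [hgj v 3, hn3]; ring
  have part1 : ∀ x y : Fin 3 → ℝ,
      ((x 0 • I1 + x 1 • I2 + x 2 • I3 + y 0 • J1 + y 1 • J2 + y 2 • J3) ∘ₗ (x 0 • I1 + x 1 • I2 + x 2 • I3 + y 0 • J1 + y 1 • J2 + y 2 • J3) = -LinearMap.id
      ↔ ((x 0 ^ 2 - x 1 ^ 2 - x 2 ^ 2 = 1 ∧ y = 0) ∨
         (y 0 ^ 2 - y 1 ^ 2 - y 2 ^ 2 = 1 ∧ x = 0))) := by
    intro x y
    constructor
    · intro h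
      have hfun : ∀ k : Fin 4, (x 0 • I1 + x 1 • I2 + x 2 • I3 + y 0 • J1 + y 1 • J2 + y 2 • J3) ((x 0 • I1 + x 1 • I2 + x 2 • I3 + y 0 • J1 + y 1 • J2 + y 2 • J3) (e k)) = -(e k) := by
        intro k
        have := LinearMap.congr_fun h (e k)
        simpa using this
      have E1 : -(x 0 + y 0)^2 + (x 1 + y 1)^2 + (x 2 + y 2)^2 = -1 := by
        have hh := congrArg (e.coord 0) (hfun 0)
        simp [hKe0 x y, hKe1 x y, hKe2 x y, hKe3 x y, map_add, map_smul, map_neg,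
          Module.Basis.coord_apply, Module.Basis.repr_self, Finsupp.single_apply] at hh
        linear_combination hh
      have E2 : -(x 0 + y 0)^2 + (x 1 - y 1)^2 + (x 2 - y 2)^2 = -1 := by
        have hh := congrArg (e.coord 1) (hfun 1)
        simp [hKe0 x y, hKe1 x y, hKe2 x y, hKe3 x y, map_add, map_smul, map_neg,
          Module.Basis.coord_apply, Module.Basis.repr_self, Finsupp.single_apply] at hh
        linear_combination hh
      have E3 : (x 1 + y 1)^2 + (x 2 - y 2)^2 - (x 0 - y 0)^2 = -1 := by
        have hh := congrArg (e.coord 2) (hfun 2)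
        simp [hKe0 x y, hKe1 x y, hKe2 x y, hKe3 x y, map_add, map_smul, map_neg,
          Module.Basis.coord_apply, Module.Basis.repr_self, Finsupp.single_apply] at hh
        linear_combination hh
      have E4 : (x 2 + y 2)^2 + (x 1 - y 1)^2 - (x 0 - y 0)^2 = -1 := by
        have hh := congrArg (e.coord 3) (hfun 3)
        simp [hKe0 x y, hKe1 x y, hKe2 x y, hKe3 x y, map_add, map_smul, map_neg,
          Module.Basis.coord_apply, Module.Basis.repr_self, Finsupp.single_apply] at hh
        linear_combination hh
      have E6 : (x 0 + y 0)*(x 2 - y 2) - (x 2 + y 2)*(x 0 - y 0) = 0 := by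
        have hh := congrArg (e.coord 2) (hfun 0)
        simp [hKe0 x y, hKe1 x y, hKe2 x y, hKe3 x y, map_add, map_smul, map_neg,
          Module.Basis.coord_apply, Module.Basis.repr_self, Finsupp.single_apply] at hh
        linear_combination hh
      have E7 : -(x 0 + y 0)*(x 1 - y 1) + (x 1 + y 1)*(x 0 - y 0) = 0 := by
        have hh := congrArg (e.coord 3) (hfun 0)
        simp [hKe0 x y, hKe1 x y, hKe2 x y, hKe3 x y, map_add, map_smul, map_neg,
          Module.Basis.coord_apply, Module.Basis.repr_self, Finsupp.single_apply] at hh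
        linear_combination hh
      rcases classify12 (x 0 + y 0) (x 1 + y 1) (x 2 + y 2)
        (x 0 - y 0) (x 1 - y 1) (x 2 - y 2) E1 E2 E3 E4 E6 E7 with
        ⟨hA, hB, hC⟩ | ⟨hA, hB, hC⟩
      · left
        have hy0 : y 0 = 0 := by linarith
        have hy1 : y 1 = 0 := by linarith
        have hy2 : y 2 = 0 := by linarith
        refine ⟨?_, funext fun j => ?_⟩
        · rw [hy0, hy1, hy2] at E1
          linear_combination -E1
        · have hj : j = 0 ∨ j = 1 ∨ j = 2 := by omega
          rcases hj with rfl | rfl | rfl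
          · simpa using hy0
          · simpa using hy1
          · simpa using hy2
      · right
        have hx0 : x 0 = 0 := by linarith
        have hx1 : x 1 = 0 := by linarith
        have hx2 : x 2 = 0 := by linarith
        refine ⟨?_, funext fun j => ?_⟩
        · rw [hx0, hx1, hx2] at E1
          linear_combination -E1
        · have hj : j = 0 ∨ j = 1 ∨ j = 2 := by omega
          rcases hj with rfl | rfl | rfl
          · simpa using hx0
          · simpa using hx1
          · simpa using hx2
    · rintro (⟨hx, hy⟩ | ⟨hy, hx⟩)
      · have hy0 : y 0 = 0 := by rw [hy]; rfl
        have hy1 : y 1 = 0 := by rw [hy]; rfl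
        have hy2 : y 2 = 0 := by rw [hy]; rfl
        refine e.ext fun k => ?_
        have hk : k = 0 ∨ k = 1 ∨ k = 2 ∨ k = 3 := by omega
        rcases hk with rfl | rfl | rfl | rfl <;>
        · simp only [LinearMap.comp_apply, LinearMap.neg_apply, LinearMap.id_apply,
            hKe0 x y, hKe1 x y, hKe2 x y, hKe3 x y, map_add, map_smul]
          match_scalars <;> simp only [hy0, hy1, hy2] <;>
            first
              | ring1
              | linear_combination hx
              | linear_combination -hx
      · have hx0 : x 0 = 0 := by rw [hx]; rfl
        have hx1 : x 1 = 0 := by rw [hx]; rfl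
        have hx2 : x 2 = 0 := by rw [hx]; rfl
        refine e.ext fun k => ?_
        have hk : k = 0 ∨ k = 1 ∨ k = 2 ∨ k = 3 := by omega
        rcases hk with rfl | rfl | rfl | rfl <;>
        · simp only [LinearMap.comp_apply, LinearMap.neg_apply, LinearMap.id_apply,
            hKe0 x y, hKe1 x y, hKe2 x y, hKe3 x y, map_add, map_smul]
          match_scalars <;> simp only [hx0, hx1, hx2] <;>
            first
              | ring1
              | linear_combination hy
              | linear_combination -hy
  have hskewgen : ∀ x y : Fin 3 → ℝ, ∀ v w : W,
      g ((x 0 • I1 + x 1 • I2 + x 2 • I3 + y 0 • J1 + y 1 • J2 + y 2 • J3) v) w = - g v ((x 0 • I1 + x 1 • I2 + x 2 • I3 + y 0 • J1 + y 1 • J2 + y 2 • J3) w) := by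
    intro x y
    have hPhi : g ∘ₗ (x 0 • I1 + x 1 • I2 + x 2 • I3 + y 0 • J1 + y 1 • J2 + y 2 • J3) + g.compl₂ (x 0 • I1 + x 1 • I2 + x 2 • I3 + y 0 • J1 + y 1 • J2 + y 2 • J3) = 0 := by
      refine e.ext fun j => e.ext fun k => ?_
      have hj : j = 0 ∨ j = 1 ∨ j = 2 ∨ j = 3 := by omega
      have hk : k = 0 ∨ k = 1 ∨ k = 2 ∨ k = 3 := by omega
      rcases hj with rfl | rfl | rfl | rfl <;> rcases hk with rfl | rfl | rfl | rfl <;>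
      · simp only [LinearMap.add_apply, LinearMap.comp_apply, LinearMap.compl₂_apply,
          LinearMap.zero_apply, hKe0 x y, hKe1 x y, hKe2 x y, hKe3 x y, map_add, map_smul,
          smul_eq_mul, LinearMap.smul_apply]
        simp [horth, hn0, hn1, hn2, hn3]
        try ring
    intro v w
    have hh := LinearMap.congr_fun (LinearMap.congr_fun hPhi v) w
    simp only [LinearMap.add_apply, LinearMap.comp_apply, LinearMap.compl₂_apply,
      LinearMap.zero_apply] at hh ⊢
    linarith
  refine ⟨part1, ?_, ?_⟩
  · ext K
    simp only [Set.mem_setOf_eq, Set.mem_union]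
    constructor
    · rintro ⟨hKK, hskew⟩
      have r00 : e.repr (K (e 0)) 0 = 0 := by
        have h1 := hskew (e 0) (e 0)
        rw [hg0 (K (e 0)), hsymm (e 0) (K (e 0)), hg0 (K (e 0))] at h1
        linarith
      have r11 : e.repr (K (e 1)) 1 = 0 := by
        have h1 := hskew (e 1) (e 1)
        rw [hg1 (K (e 1)), hsymm (e 1) (K (e 1)), hg1 (K (e 1))] at h1
        linarith
      have r22 : e.repr (K (e 2)) 2 = 0 := by
        have h1 := hskew (e 2) (e 2)
        rw [hg2 (K (e 2)), hsymm (e 2) (K (e 2)), hg2 (K (e 2))] at h1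
        linarith
      have r33 : e.repr (K (e 3)) 3 = 0 := by
        have h1 := hskew (e 3) (e 3)
        rw [hg3 (K (e 3)), hsymm (e 3) (K (e 3)), hg3 (K (e 3))] at h1
        linarith
      have r10 : e.repr (K (e 1)) 0 = -(e.repr (K (e 0)) 1) := by
        have h1 := hskew (e 1) (e 0)
        rw [hg0 (K (e 1)), hsymm (e 1) (K (e 0)), hg1 (K (e 0))] at h1
        linarith
      have r20 : e.repr (K (e 2)) 0 = e.repr (K (e 0)) 2 := by
        have h1 := hskew (e 2) (e 0)
        rw [hg0 (K (e 2)), hsymm (e 2) (K (e 0)), hg2 (K (e 0))] at h1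
        linarith
      have r30 : e.repr (K (e 3)) 0 = e.repr (K (e 0)) 3 := by
        have h1 := hskew (e 3) (e 0)
        rw [hg0 (K (e 3)), hsymm (e 3) (K (e 0)), hg3 (K (e 0))] at h1
        linarith
      have r21 : e.repr (K (e 2)) 1 = e.repr (K (e 1)) 2 := by
        have h1 := hskew (e 2) (e 1)
        rw [hg1 (K (e 2)), hsymm (e 2) (K (e 1)), hg2 (K (e 1))] at h1
        linarith
      have r31 : e.repr (K (e 3)) 1 = e.repr (K (e 1)) 3 := by
        have h1 := hskew (e 3) (e 1)
        rw [hg1 (K (e 3)), hsymm (e 3) (K (e 1)), hg3 (K (e 1))] at h1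
        linarith
      have r32 : e.repr (K (e 3)) 2 = -(e.repr (K (e 2)) 3) := by
        have h1 := hskew (e 3) (e 2)
        rw [hg2 (K (e 3)), hsymm (e 3) (K (e 2)), hg3 (K (e 2))] at h1
        linarith
      have hKeq : K = (![(e.repr (K (e 0)) 1 + e.repr (K (e 2)) 3)/2, (e.repr (K (e 0)) 2 + (-(e.repr (K (e 1)) 3)))/2, (e.repr (K (e 0)) 3 + e.repr (K (e 1)) 2)/2] : Fin 3 → ℝ) 0 • I1 + (![(e.repr (K (e 0)) 1 + e.repr (K (e 2)) 3)/2, (e.repr (K (e 0)) 2 + (-(e.repr (K (e 1)) 3)))/2, (e.repr (K (e 0)) 3 + e.repr (K (e 1)) 2)/2] : Fin 3 → ℝ) 1 • I2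
          + (![(e.repr (K (e 0)) 1 + e.repr (K (e 2)) 3)/2, (e.repr (K (e 0)) 2 + (-(e.repr (K (e 1)) 3)))/2, (e.repr (K (e 0)) 3 + e.repr (K (e 1)) 2)/2] : Fin 3 → ℝ) 2 • I3 + (![(e.repr (K (e 0)) 1 - e.repr (K (e 2)) 3)/2, (e.repr (K (e 0)) 2 - (-(e.repr (K (e 1)) 3)))/2, (e.repr (K (e 0)) 3 - e.repr (K (e 1)) 2)/2] : Fin 3 → ℝ) 0 • J1
          + (![(e.repr (K (e 0)) 1 - e.repr (K (e 2)) 3)/2, (e.repr (K (e 0)) 2 - (-(e.repr (K (e 1)) 3)))/2, (e.repr (K (e 0)) 3 - e.repr (K (e 1)) 2)/2] : Fin 3 → ℝ) 1 • J2 + (![(e.repr (K (e 0)) 1 - e.repr (K (e 2)) 3)/2, (e.repr (K (e 0)) 2 - (-(e.repr (K (e 1)) 3)))/2, (e.repr (K (e 0)) 3 - e.repr (K (e 1)) 2)/2] : Fin 3 → ℝ) 2 • J3 := by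
        refine e.ext fun k => ?_
        have hk : k = 0 ∨ k = 1 ∨ k = 2 ∨ k = 3 := by omega
        rcases hk with rfl | rfl | rfl | rfl
        · rw [hKe0 (![(e.repr (K (e 0)) 1 + e.repr (K (e 2)) 3)/2, (e.repr (K (e 0)) 2 + (-(e.repr (K (e 1)) 3)))/2, (e.repr (K (e 0)) 3 + e.repr (K (e 1)) 2)/2]) (![(e.repr (K (e 0)) 1 - e.repr (K (e 2)) 3)/2, (e.repr (K (e 0)) 2 - (-(e.repr (K (e 1)) 3)))/2, (e.repr (K (e 0)) 3 - e.repr (K (e 1)) 2)/2])]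
          conv_lhs => rw [← e.sum_repr (K (e 0))]
          rw [Fin.sum_univ_four]
          simp only [Matrix.cons_val_zero, Matrix.cons_val_one, Matrix.head_cons,
            Matrix.cons_val_two, Matrix.tail_cons]
          match_scalars <;>
            first
              | ring1
              | linear_combination r00 | linear_combination r11
              | linear_combination r22 | linear_combination r33
              | linear_combination r10 | linear_combination r20
              | linear_combination r30 | linear_combination r21
              | linear_combination r31 | linear_combination r32
        · rw [hKe1 (![(e.repr (K (e 0)) 1 + e.repr (K (e 2)) 3)/2, (e.repr (K (e 0)) 2 + (-(e.repr (K (e 1)) 3)))/2, (e.repr (K (e 0)) 3 + e.repr (K (e 1)) 2)/2]) (![(e.repr (K (e 0)) 1 - e.repr (K (e 2)) 3)/2, (e.repr (K (e 0)) 2 - (-(e.repr (K (e 1)) 3)))/2, (e.repr (K (e 0)) 3 - e.repr (K (e 1)) 2)/2])]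
          conv_lhs => rw [← e.sum_repr (K (e 1))]
          rw [Fin.sum_univ_four]
          simp only [Matrix.cons_val_zero, Matrix.cons_val_one, Matrix.head_cons,
            Matrix.cons_val_two, Matrix.tail_cons]
          match_scalars <;>
            first
              | ring1
              | linear_combination r00 | linear_combination r11
              | linear_combination r22 | linear_combination r33
              | linear_combination r10 | linear_combination r20
              | linear_combination r30 | linear_combination r21
              | linear_combination r31 | linear_combination r32
        · rw [hKe2 (![(e.repr (K (e 0)) 1 + e.repr (K (e 2)) 3)/2, (e.repr (K (e 0)) 2 + (-(e.repr (K (e 1)) 3)))/2, (e.repr (K (e 0)) 3 + e.repr (K (e 1)) 2)/2]) (![(e.repr (K (e 0)) 1 - e.repr (K (e 2)) 3)/2, (e.repr (K (e 0)) 2 - (-(e.repr (K (e 1)) 3)))/2, (e.repr (K (e 0)) 3 - e.repr (K (e 1)) 2)/2])]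
          conv_lhs => rw [← e.sum_repr (K (e 2))]
          rw [Fin.sum_univ_four]
          simp only [Matrix.cons_val_zero, Matrix.cons_val_one, Matrix.head_cons,
            Matrix.cons_val_two, Matrix.tail_cons]
          match_scalars <;>
            first
              | ring1
              | linear_combination r00 | linear_combination r11
              | linear_combination r22 | linear_combination r33
              | linear_combination r10 | linear_combination r20
              | linear_combination r30 | linear_combination r21
              | linear_combination r31 | linear_combination r32
        · rw [hKe3 (![(e.repr (K (e 0)) 1 + e.repr (K (e 2)) 3)/2, (e.repr (K (e 0)) 2 + (-(e.repr (K (e 1)) 3)))/2, (e.repr (K (e 0)) 3 + e.repr (K (e 1)) 2)/2]) (![(e.repr (K (e 0)) 1 - e.repr (K (e 2)) 3)/2, (e.repr (K (e 0)) 2 - (-(e.repr (K (e 1)) 3)))/2, (e.repr (K (e 0)) 3 - e.repr (K (e 1)) 2)/2])]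
          conv_lhs => rw [← e.sum_repr (K (e 3))]
          rw [Fin.sum_univ_four]
          simp only [Matrix.cons_val_zero, Matrix.cons_val_one, Matrix.head_cons,
            Matrix.cons_val_two, Matrix.tail_cons]
          match_scalars <;>
            first
              | ring1
              | linear_combination r00 | linear_combination r11
              | linear_combination r22 | linear_combination r33
              | linear_combination r10 | linear_combination r20
              | linear_combination r30 | linear_combination r21
              | linear_combination r31 | linear_combination r32
      have hKK' := hKK
      rw [hKeq] at hKK'
      rcases (part1 (![(e.repr (K (e 0)) 1 + e.repr (K (e 2)) 3)/2, (e.repr (K (e 0)) 2 + (-(e.repr (K (e 1)) 3)))/2, (e.repr (K (e 0)) 3 + e.repr (K (e 1)) 2)/2]) (![(e.repr (K (e 0)) 1 - e.repr (K (e 2)) 3)/2, (e.repr (K (e 0)) 2 - (-(e.repr (K (e 1)) 3)))/2, (e.repr (K (e 0)) 3 - e.repr (K (e 1)) 2)/2])).mp hKK' with ⟨hq, hz⟩ | ⟨hq, hz⟩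
      · left
        refine ⟨(![(e.repr (K (e 0)) 1 + e.repr (K (e 2)) 3)/2, (e.repr (K (e 0)) 2 + (-(e.repr (K (e 1)) 3)))/2, (e.repr (K (e 0)) 3 + e.repr (K (e 1)) 2)/2]), hq, ?_⟩
        conv_lhs => rw [hKeq]
        rw [hz]
        simp
      · right
        refine ⟨(![(e.repr (K (e 0)) 1 - e.repr (K (e 2)) 3)/2, (e.repr (K (e 0)) 2 - (-(e.repr (K (e 1)) 3)))/2, (e.repr (K (e 0)) 3 - e.repr (K (e 1)) 2)/2]), hq, ?_⟩
        conv_lhs => rw [hKeq]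
        rw [hz]
        simp
    · rintro (⟨x, hx, rfl⟩ | ⟨y, hy, rfl⟩)
      · constructor
        · have h := (part1 x 0).mpr (Or.inl ⟨hx, rfl⟩)
          have hc : (x 0 • I1 + x 1 • I2 + x 2 • I3 : W →ₗ[ℝ] W) = x 0 • I1 + x 1 • I2 + x 2 • I3 + (0 : Fin 3 → ℝ) 0 • J1 + (0 : Fin 3 → ℝ) 1 • J2 + (0 : Fin 3 → ℝ) 2 • J3 := by simp
          rw [hc]
          exact h
        · intro v w
          have := hskewgen x 0 v w
          simpa using this
      · constructor
        · have h := (part1 0 y).mpr (Or.inr ⟨hy, rfl⟩)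
          have hc : (y 0 • J1 + y 1 • J2 + y 2 • J3 : W →ₗ[ℝ] W) = (0 : Fin 3 → ℝ) 0 • I1 + (0 : Fin 3 → ℝ) 1 • I2 + (0 : Fin 3 → ℝ) 2 • I3 + y 0 • J1 + y 1 • J2 + y 2 • J3 := by simp
          rw [hc]
          exact h
        · intro v w
          have := hskewgen 0 y v w
          simpa using this
  · rw [Set.disjoint_left]
    rintro K ⟨x, hx, rfl⟩ ⟨y, hy, hK⟩
    have hK' : (x 0 • I1 + x 1 • I2 + x 2 • I3 + (0 : Fin 3 → ℝ) 0 • J1 + (0 : Fin 3 → ℝ) 1 • J2 + (0 : Fin 3 → ℝ) 2 • J3 : W →ₗ[ℝ] W) = (0 : Fin 3 → ℝ) 0 • I1 + (0 : Fin 3 → ℝ) 1 • I2 + (0 : Fin 3 → ℝ) 2 • I3 + y 0 • J1 + y 1 • J2 + y 2 • J3 := by simpa using hK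
    have d1 := congrArg (e.coord 1) (LinearMap.congr_fun hK' (e 0))
    have d2 := congrArg (e.coord 2) (LinearMap.congr_fun hK' (e 0))
    have d3 := congrArg (e.coord 3) (LinearMap.congr_fun hK' (e 0))
    have d4 := congrArg (e.coord 3) (LinearMap.congr_fun hK' (e 2))
    have d5 := congrArg (e.coord 3) (LinearMap.congr_fun hK' (e 1))
    have d6 := congrArg (e.coord 2) (LinearMap.congr_fun hK' (e 1))
    simp only [hKe0 x 0, hKe0 0 y, hKe1 x 0, hKe1 0 y, hKe2 x 0, hKe2 0 y,
      hKe3 x 0, hKe3 0 y, map_add, map_smul, map_neg, Module.Basis.coord_apply,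
      Module.Basis.repr_self] at d1 d2 d3 d4 d5 d6
    simp [Finsupp.single_apply, Pi.zero_apply] at d1 d2 d3 d4 d5 d6
    have hx0 : x 0 = 0 := by linarith
    have hx1 : x 1 = 0 := by linarith
    have hx2 : x 2 = 0 := by linarith
    rw [hx0, hx1, hx2] at hx
    norm_num at hx
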